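/- Let p ∈ (0,1/2) and δ ∈ [0,1]. Then liminf_{n→∞} (1/n) log P(M_n ≤ n(1−δ)) ≥ −δ·D(1/2‖p). -/

import Mathlib

open MeasureTheory ProbabilityTheory Filter
open scoped ENNReal

noncomputable section

/-- Kullback–Leibler divergence `D(1/2 ‖ p)` between Bernoulli(1/2) and Bernoulli(p). -/
def Dhalf (p : ℝ) : ℝ := (1/2) * Real.log ((1/2)/p) + (1/2) * Real.log ((1/2)/(1-p))

variable {Ω : Type*} [MeasurableSpace Ω]

/-- The random walk `X_n = Y_1 + ⋯ + Y_n` (here the steps are indexed `Y 0, Y 1, …`). -/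
def walk (Y : ℕ → Ω → ℤ) (n : ℕ) (ω : Ω) : ℤ := ∑ i ∈ Finset.range n, Y i ω

/-- The sign process `X̂_n`: `+1` if `X_n > 0`, `-1` if `X_n < 0`, previous value if `X_n = 0`,
with `X̂_0 = +1`. -/
def sgnProc (Y : ℕ → Ω → ℤ) : ℕ → Ω → ℤ
  | 0 => fun _ => 1
  | n+1 => fun ω =>
      if 0 < walk Y (n+1) ω then 1
      else if walk Y (n+1) ω < 0 then -1
      else sgnProc Y n ω

/-- `M_n = #{1 ≤ i ≤ n : X̂_i = +1}`. -/
def Mcount (Y : ℕ → Ω → ℤ) (n : ℕ) (ω : Ω) : ℕ :=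
  ((Finset.Icc 1 n).filter fun i => sgnProc Y i ω = 1).card

section Aux
open List MeasureTheory ProbabilityTheory Filter
open scoped ENNReal

/-- step values: U ↦ -1 (down in our walk), D ↦ +1 -/
def stepVal : DyckStep → ℤ
  | DyckStep.U => -1
  | DyckStep.D => 1

lemma stepVal_injective : Function.Injective stepVal := by
  intro a b h; cases a <;> cases b <;> simp [stepVal] at h ⊢

/-- the ±1 sequence associated to a Dyck word: a leading -1 then the flipped word -/
def dseq (w : DyckWord) : List ℤ := (-1) :: (w.toList.map stepVal)

lemma dseq_injective : Function.Injective dseq := by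
  intro a b h
  simp only [dseq, List.cons.injEq, true_and] at h
  exact DyckWord.ext ((List.map_injective_iff.mpr stepVal_injective) h)

lemma dseq_length (w : DyckWord) : (dseq w).length = 2 * w.semilength + 1 := by
  simp [dseq, DyckWord.two_mul_semilength_eq_length]

lemma sum_map_stepVal (l : List DyckStep) :
    (l.map stepVal).sum = (l.count DyckStep.D : ℤ) - (l.count DyckStep.U : ℤ) := by
  induction l with
  | nil => simp
  | cons a t ih =>
    cases a <;> simp [stepVal, ih, List.count_cons] <;> ring

lemma dseq_count_neg (w : DyckWord) : (dseq w).count (-1 : ℤ) = w.semilength + 1 := by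
  have : (w.toList.map stepVal).count (-1 : ℤ) = w.toList.count DyckStep.U := by
    have := List.count_map_of_injective w.toList stepVal stepVal_injective DyckStep.U
    simpa [stepVal] using this
  simp [dseq, List.count_cons, this, DyckWord.semilength, Nat.add_comm]

lemma dseq_count_pos (w : DyckWord) : (dseq w).count (1 : ℤ) = w.semilength := by
  have : (w.toList.map stepVal).count (1 : ℤ) = w.toList.count DyckStep.D := by
    have := List.count_map_of_injective w.toList stepVal stepVal_injective DyckStep.D
    simpa [stepVal] using this
  simp [dseq, List.count_cons, this, ← DyckWord.semilength_eq_count_D]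

lemma dseq_mem (w : DyckWord) : ∀ x ∈ dseq w, x = 1 ∨ x = -1 := by
  intro x hx
  rcases hx with _ | hx
  · right; rfl
  · rcases List.mem_map.mp (by assumption) with ⟨s, _, rfl⟩
    cases s
    · right; rfl
    · left; rfl

lemma dseq_take_sum (w : DyckWord) {i : ℕ} (h1 : 1 ≤ i) :
    ((dseq w).take i).sum ≤ -1 := by
  obtain ⟨j, rfl⟩ := Nat.exists_eq_add_of_le h1
  rw [Nat.add_comm]
  simp only [dseq, List.take_succ_cons, List.sum_cons, ← List.map_take, sum_map_stepVal]
  have := w.count_D_le_count_U j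
  omega

lemma sum_range_getD (l : List ℤ) : ∀ i, i ≤ l.length →
    ∑ j ∈ Finset.range i, l.getD j 0 = (l.take i).sum := by
  intro i
  induction i with
  | zero => simp
  | succ i ih =>
    intro hi
    have hi' : i < l.length := hi
    rw [Finset.sum_range_succ, ih (le_of_lt hi'), ← List.take_concat_get' l i hi',
      List.sum_append, List.getD_eq_getElem l 0 hi']
    simp

lemma prod_range_getD {M : Type*} [CommMonoid M] (f : ℤ → M) (l : List ℤ)
    (hl : ∀ x ∈ l, x = 1 ∨ x = -1) :
    ∏ i ∈ Finset.range l.length, f (l.getD i 0)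
      = f 1 ^ l.count 1 * f (-1) ^ l.count (-1) := by
  induction l with
  | nil => simp
  | cons a t ih =>
    have ht : ∀ x ∈ t, x = 1 ∨ x = -1 := fun x hx => hl x (List.mem_cons_of_mem a hx)
    have step : ∏ i ∈ Finset.range (a :: t).length, f ((a :: t).getD i 0)
        = (∏ i ∈ Finset.range t.length, f (t.getD i 0)) * f a := by
      rw [List.length_cons, Finset.prod_range_succ']
      rfl
    rw [step, ih ht]
    rcases hl a List.mem_cons_self with rfl | rfl
    · rw [List.count_cons_self, List.count_cons_of_ne (by norm_num)]
      rw [pow_add, pow_one]; ac_rfl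
    · rw [List.count_cons_self, List.count_cons_of_ne (by norm_num)]
      rw [pow_add, pow_one]; ac_rfl

section Prob

variable {Ω : Type*} [MeasurableSpace Ω]

lemma meas_Y_eq (μ : MeasureTheory.Measure Ω) [MeasureTheory.IsProbabilityMeasure μ]
    (p : ℝ) (hp0 : 0 ≤ p) (hp1 : p ≤ 1)
    (Y : ℕ → Ω → ℤ) (hmeas : ∀ i, Measurable (Y i))
    (hrange : ∀ i ω, Y i ω = 1 ∨ Y i ω = -1)
    (hdist : ∀ i, μ {ω | Y i ω = 1} = ENNReal.ofReal (1 - p))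
    (i : ℕ) (c : ℤ) (hc : c = 1 ∨ c = -1) :
    μ (Y i ⁻¹' {c}) = ENNReal.ofReal (if c = 1 then 1 - p else p) := by
  have hset1 : Y i ⁻¹' {(1:ℤ)} = {ω | Y i ω = 1} := rfl
  rcases hc with rfl | rfl
  · rw [if_pos rfl, hset1, hdist]
  · rw [if_neg (by norm_num)]
    have hsetm : Y i ⁻¹' {(-1:ℤ)} = {ω | Y i ω = 1}ᶜ := by
      ext ω
      rcases hrange i ω with h | h <;> simp [h]
    rw [hsetm, MeasureTheory.measure_compl (by
        rw [← hset1]; exact hmeas i (measurableSet_singleton 1))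
        (MeasureTheory.measure_ne_top μ _), hdist]
    have key : ENNReal.ofReal (1 - p) + ENNReal.ofReal p = 1 := by
      rw [← ENNReal.ofReal_add (by linarith) hp0]
      norm_num
    rw [MeasureTheory.measure_univ, ← key]
    exact ENNReal.add_sub_cancel_left (by simp)

end Prob

open MeasureTheory ProbabilityTheory Filter
open scoped ENNReal


def cyl (Y : ℕ → Ω → ℤ) (l : List ℤ) : Set Ω :=
  ⋂ i ∈ Finset.range l.length, Y i ⁻¹' {l.getD i 0}

lemma cyl_measurableSet (Y : ℕ → Ω → ℤ) (hmeas : ∀ i, Measurable (Y i)) (l : List ℤ) :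
    MeasurableSet (cyl Y l) :=
  Finset.measurableSet_biInter _ fun i _ => hmeas i (measurableSet_singleton _)

lemma mem_cyl {Y : ℕ → Ω → ℤ} {l : List ℤ} {ω : Ω} :
    ω ∈ cyl Y l ↔ ∀ i < l.length, Y i ω = l.getD i 0 := by
  simp [cyl]

lemma cyl_disjoint {Y : ℕ → Ω → ℤ} {l₁ l₂ : List ℤ} (hlen : l₁.length = l₂.length)
    (hne : l₁ ≠ l₂) : Disjoint (cyl Y l₁) (cyl Y l₂) := by
  rw [Set.disjoint_left]
  intro ω h1 h2
  apply hne
  apply List.ext_getElem hlen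
  intro i hi1 hi2
  rw [← List.getD_eq_getElem l₁ 0 hi1, ← List.getD_eq_getElem l₂ 0 hi2,
    ← mem_cyl.mp h1 i hi1, ← mem_cyl.mp h2 i (hlen ▸ hi1)]

lemma cyl_meas (μ : Measure Ω) [IsProbabilityMeasure μ]
    (p : ℝ) (hp0 : 0 ≤ p) (hp1 : p ≤ 1)
    (Y : ℕ → Ω → ℤ) (hmeas : ∀ i, Measurable (Y i))
    (hrange : ∀ i ω, Y i ω = 1 ∨ Y i ω = -1)
    (hdist : ∀ i, μ {ω | Y i ω = 1} = ENNReal.ofReal (1 - p))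
    (hindep : iIndepFun Y μ)
    (l : List ℤ) (hl : ∀ x ∈ l, x = 1 ∨ x = -1) :
    μ (cyl Y l) = ENNReal.ofReal (1-p) ^ l.count 1 * ENNReal.ofReal p ^ l.count (-1) := by
  have key := hindep.measure_inter_preimage_eq_mul (S := Finset.range l.length)
    (sets := fun i => {l.getD i 0}) (fun i _ => measurableSet_singleton _)
  rw [cyl, key]
  have heach : ∀ i ∈ Finset.range l.length,
      μ (Y i ⁻¹' {l.getD i 0}) = (fun c : ℤ => ENNReal.ofReal (if c = 1 then 1 - p else p)) (l.getD i 0) := by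
    intro i hi
    have hi' : i < l.length := Finset.mem_range.mp hi
    exact meas_Y_eq μ p hp0 hp1 Y hmeas hrange hdist i _
      (by rw [List.getD_eq_getElem l 0 hi']; exact hl _ (List.getElem_mem hi'))
  rw [Finset.prod_congr rfl heach]
  have h2 := prod_range_getD (fun c : ℤ => ENNReal.ofReal (if c = 1 then 1 - p else p)) l hl
  simp only [h2]
  norm_num

lemma sgn_neg_of_cyl (Y : ℕ → Ω → ℤ) (w : DyckWord) (ω : Ω)
    (hω : ω ∈ cyl Y (dseq w)) :
    ∀ i, 1 ≤ i → i ≤ (dseq w).length → sgnProc Y i ω = -1 := by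
  intro i h1 h2
  have hwalk : walk Y i ω ≤ -1 := by
    have : walk Y i ω = ((dseq w).take i).sum := by
      rw [← sum_range_getD _ i h2, walk]
      exact Finset.sum_congr rfl fun j hj =>
        mem_cyl.mp hω j (lt_of_lt_of_le (Finset.mem_range.mp hj) h2)
    rw [this]
    exact dseq_take_sum w h1
  obtain ⟨j, rfl⟩ : ∃ j, i = j + 1 := ⟨i - 1, by omega⟩
  show (if 0 < walk Y (j+1) ω then 1
      else if walk Y (j+1) ω < 0 then -1 else sgnProc Y j ω) = -1
  rw [if_neg (by omega), if_pos (by omega)]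

lemma Mcount_le_of_sgn (Y : ℕ → Ω → ℤ) (n m : ℕ) (ω : Ω)
    (h : ∀ i, 1 ≤ i → i ≤ m → sgnProc Y i ω = -1) :
    Mcount Y n ω ≤ n - m := by
  have hsub : (Finset.Icc 1 n).filter (fun i => sgnProc Y i ω = 1) ⊆ Finset.Icc (m+1) n := by
    intro i hi
    rw [Finset.mem_filter, Finset.mem_Icc] at hi
    rw [Finset.mem_Icc]
    refine ⟨?_, hi.1.2⟩
    by_contra hle
    have : sgnProc Y i ω = -1 := h i hi.1.1 (by omega)
    rw [this] at hi
    exact absurd hi.2 (by norm_num)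
  calc Mcount Y n ω ≤ (Finset.Icc (m+1) n).card := Finset.card_le_card hsub
    _ = n - m := by rw [Nat.card_Icc]; omega

lemma measure_ge (μ : Measure Ω) [IsProbabilityMeasure μ]
    (p : ℝ) (hp0 : 0 ≤ p) (hp1 : p ≤ 1)
    (Y : ℕ → Ω → ℤ) (hmeas : ∀ i, Measurable (Y i))
    (hrange : ∀ i ω, Y i ω = 1 ∨ Y i ω = -1)
    (hdist : ∀ i, μ {ω | Y i ω = 1} = ENNReal.ofReal (1 - p))
    (hindep : iIndepFun Y μ)
    (k : ℕ) (S : Set Ω)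
    (hS : ∀ ω, (∀ i, 1 ≤ i → i ≤ 2*k+1 → sgnProc Y i ω = -1) → ω ∈ S) :
    (catalan k : ℝ≥0∞) * (ENNReal.ofReal (1-p) ^ k * ENNReal.ofReal p ^ (k+1)) ≤ μ S := by
  classical
  set G : Finset (List ℤ) :=
    Finset.image (fun w : {w : DyckWord // w.semilength = k} => dseq w.1) Finset.univ with hG
  have hinj : Function.Injective (fun w : {w : DyckWord // w.semilength = k} => dseq w.1) :=
    fun a b h => Subtype.ext (dseq_injective h)
  have hcard : G.card = catalan k := by
    rw [hG, Finset.card_image_of_injective _ hinj, Finset.card_univ,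
      DyckWord.card_dyckWord_semilength_eq_catalan]
  have hmem : ∀ l ∈ G, l.length = 2*k+1 ∧ l.count (1:ℤ) = k ∧ l.count (-1:ℤ) = k+1
      ∧ (∀ x ∈ l, x = 1 ∨ x = -1) := by
    intro l hl
    obtain ⟨w, -, rfl⟩ := Finset.mem_image.mp hl
    exact ⟨by rw [dseq_length, w.2], by rw [dseq_count_pos, w.2],
      by rw [dseq_count_neg, w.2], dseq_mem w.1⟩
  have hsub : (⋃ l ∈ G, cyl Y l) ⊆ S := by
    intro ω hω
    rw [Set.mem_iUnion₂] at hω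
    obtain ⟨l, hlG, hωl⟩ := hω
    obtain ⟨w, -, rfl⟩ := Finset.mem_image.mp hlG
    apply hS
    intro i h1 h2
    exact sgn_neg_of_cyl Y w.1 ω hωl i h1 (by rw [dseq_length, w.2]; exact h2)
  have hdisj : (G : Set (List ℤ)).PairwiseDisjoint (cyl Y) := by
    intro l₁ h₁ l₂ h₂ hne
    exact cyl_disjoint (by rw [(hmem l₁ h₁).1, (hmem l₂ h₂).1]) hne
  calc (catalan k : ℝ≥0∞) * (ENNReal.ofReal (1-p) ^ k * ENNReal.ofReal p ^ (k+1))
      = ∑ l ∈ G, μ (cyl Y l) := by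
        rw [Finset.sum_congr rfl (fun l hl => by
          rw [cyl_meas μ p hp0 hp1 Y hmeas hrange hdist hindep l (hmem l hl).2.2.2,
            (hmem l hl).2.1, (hmem l hl).2.2.1])]
        rw [Finset.sum_const, hcard, nsmul_eq_mul]
    _ = μ (⋃ l ∈ G, cyl Y l) :=
        (measure_biUnion_finset hdisj (fun l _ => cyl_measurableSet Y hmeas l)).symm
    _ ≤ μ S := measure_mono hsub
lemma catalan_real_bound (k : ℕ) :
    (k : ℝ) * Real.log 4 - Real.log 2 - 2 * Real.log ((k:ℝ)+1) ≤ Real.log (catalan k) := by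
  have hnat : 4^k ≤ 2*(k+1)^2 * catalan k := by
    rcases Nat.eq_zero_or_pos k with rfl | hk
    · norm_num
    · calc 4^k ≤ 2*k * Nat.centralBinom k :=
            Nat.four_pow_le_two_mul_self_mul_centralBinom k hk
        _ = 2*k * ((k+1) * catalan k) := by rw [succ_mul_catalan_eq_centralBinom]
        _ ≤ 2*(k+1)^2 * catalan k := by nlinarith [Nat.le_succ k]
  have hreal : (4:ℝ)^k ≤ 2*((k:ℝ)+1)^2 * (catalan k : ℝ) := by
    have := Nat.cast_le (α := ℝ).mpr hnat
    push_cast at this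
    convert this using 2 <;> push_cast <;> ring
  have hcatpos : (0:ℝ) < (catalan k : ℝ) := by
    have h1 := succ_mul_catalan_eq_centralBinom k
    have h2 := Nat.centralBinom_pos k
    have : 0 < catalan k := by
      by_contra h
      have h0 : catalan k = 0 := by omega
      rw [h0, Nat.mul_zero] at h1
      omega
    exact_mod_cast this
  have hlog := Real.log_le_log (by positivity) hreal
  rw [Real.log_pow, Real.log_mul (by positivity) (ne_of_gt hcatpos),
    Real.log_mul (by norm_num) (by positivity), Real.log_pow] at hlog
  push_cast at hlog ⊢
  linarith

end Aux

/-- For `p ∈ (0,1/2)` and `δ ∈ [0,1]`,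
`liminf_{n→∞} (1/n) log P(M_n ≤ n(1−δ)) ≥ −δ·D(1/2‖p)`. -/
theorem stmt3
    (μ : Measure Ω) [IsProbabilityMeasure μ]
    (p : ℝ) (hp : p ∈ Set.Ioo (0:ℝ) (1/2))
    (Y : ℕ → Ω → ℤ)
    (hmeas : ∀ i, Measurable (Y i))
    (hrange : ∀ i ω, Y i ω = 1 ∨ Y i ω = -1)
    (hdist : ∀ i, μ {ω | Y i ω = 1} = ENNReal.ofReal (1 - p))
    (hindep : iIndepFun Y μ)
    (δ : ℝ) (hδ : δ ∈ Set.Icc (0:ℝ) 1) :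
    -(δ * Dhalf p) ≤
      Filter.liminf
        (fun n : ℕ =>
          Real.log ((μ {ω | (Mcount Y n ω : ℝ) ≤ (n : ℝ) * (1 - δ)}).toReal) / (n : ℝ))
        atTop := by
  obtain ⟨hp0, hp2⟩ := hp
  obtain ⟨hδ0, hδ1⟩ := hδ
  have h1p : 0 < 1 - p := by linarith
  set c : ℝ := Real.log 4 + Real.log p + Real.log (1 - p) with hc
  have hlog4 : Real.log 4 = 2 * Real.log 2 := by
    rw [show (4:ℝ) = 2^2 by norm_num, Real.log_pow]; norm_num
  have hDc : -(δ * Dhalf p) = δ * c / 2 := by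
    rw [Dhalf, hc, Real.log_div (by norm_num) (ne_of_gt hp0),
      Real.log_div (by norm_num) (ne_of_gt h1p),
      show Real.log (1/2) = - Real.log 2 by rw [one_div, Real.log_inv], hlog4]
    ring
  have hcneg : c < 0 := by
    have : c = Real.log (4*p*(1-p)) := by
      rw [Real.log_mul (by positivity) (ne_of_gt h1p), Real.log_mul (by norm_num) (ne_of_gt hp0)]
    rw [this]
    exact Real.log_neg (by positivity) (by nlinarith)
  set C0 : ℝ := c + Real.log p - Real.log 2 with hC0
  set g : ℕ → ℝ := fun n =>
    Real.log ((μ {ω | (Mcount Y n ω : ℝ) ≤ (n : ℝ) * (1 - δ)}).toReal) / (n : ℝ) with hg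
  set u : ℕ → ℝ := fun n => δ * c / 2 + (C0 - 2 * Real.log ((n:ℝ)+2)) / (n:ℝ) with hu
  -- pointwise bound for n ≥ 1
  have hpoint : ∀ n : ℕ, 1 ≤ n → u n ≤ g n := by
    intro n hn
    have hnR : (0:ℝ) < (n:ℝ) := by exact_mod_cast hn
    set k : ℕ := ⌈δ * (n:ℝ) / 2⌉₊ with hk
    set T : Set Ω := {ω | (Mcount Y n ω : ℝ) ≤ (n : ℝ) * (1 - δ)} with hT
    have hkge : δ * (n:ℝ) / 2 ≤ (k:ℝ) := Nat.le_ceil _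
    have hkle : (k:ℝ) < δ * (n:ℝ) / 2 + 1 := Nat.ceil_lt_add_one (by positivity)
    -- the inclusion hypothesis
    have hS : ∀ ω, (∀ i, 1 ≤ i → i ≤ 2*k+1 → sgnProc Y i ω = -1) → ω ∈ T := by
      intro ω hω
      have hM : Mcount Y n ω ≤ n - (2*k+1) := Mcount_le_of_sgn Y n (2*k+1) ω hω
      have hMR : (Mcount Y n ω : ℝ) ≤ ((n - (2*k+1) : ℕ) : ℝ) := by exact_mod_cast hM
      rw [hT, Set.mem_setOf_eq]
      by_cases hmn : 2*k+1 ≤ n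
      · rw [Nat.cast_sub hmn] at hMR
        push_cast at hMR
        have h1 : δ * (n:ℝ) ≤ 2*(k:ℝ)+1 := by linarith
        have h2 : (n:ℝ) * (1-δ) = (n:ℝ) - δ * (n:ℝ) := by ring
        rw [h2]; linarith
      · have h0 : n - (2*k+1) = 0 := by omega
        rw [h0] at hMR
        norm_num at hMR
        have hM0 : (Mcount Y n ω : ℝ) = 0 := by exact_mod_cast hMR
        rw [hM0]
        nlinarith
    have hq := measure_ge μ p (le_of_lt hp0) (by linarith) Y hmeas hrange hdist hindep k T hS
    set qR : ℝ := (catalan k : ℝ) * ((1-p)^k * p^(k+1)) with hqR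
    have hcatpos : (0:ℝ) < (catalan k : ℝ) := by
      have h1 := succ_mul_catalan_eq_centralBinom k
      have h2 := Nat.centralBinom_pos k
      have : 0 < catalan k := by
        rcases Nat.eq_zero_or_pos (catalan k) with h | h
        · rw [h, Nat.mul_zero] at h1; omega
        · exact h
      exact_mod_cast this
    have hqRpos : 0 < qR := by rw [hqR]; positivity
    have htoReal : qR ≤ (μ T).toReal := by
      have : ((catalan k : ℝ≥0∞) * (ENNReal.ofReal (1-p) ^ k
          * ENNReal.ofReal p ^ (k+1))).toReal = qR := by
        rw [ENNReal.toReal_mul, ENNReal.toReal_mul, ENNReal.toReal_pow, ENNReal.toReal_pow,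
          ENNReal.toReal_ofReal (le_of_lt h1p), ENNReal.toReal_ofReal (le_of_lt hp0)]
        simp [hqR]
      rw [← this]
      exact ENNReal.toReal_mono (measure_ne_top μ T) hq
    have hlogT : Real.log qR ≤ Real.log ((μ T).toReal) := Real.log_le_log hqRpos htoReal
    have hlogqR : Real.log qR = Real.log (catalan k : ℝ)
        + (k:ℝ) * Real.log (1-p) + ((k:ℝ)+1) * Real.log p := by
      rw [hqR, Real.log_mul (ne_of_gt hcatpos) (by positivity),
        Real.log_mul (by positivity) (by positivity), Real.log_pow, Real.log_pow]
      push_cast; ring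
    have hcat := catalan_real_bound k
    -- numerator bound
    have hklog : Real.log ((k:ℝ)+1) ≤ Real.log ((n:ℝ)+2) := by
      apply Real.log_le_log (by positivity)
      have : δ * (n:ℝ) / 2 ≤ (n:ℝ) := by nlinarith
      linarith
    have hnum : (δ * (n:ℝ) / 2 + 1) * c + Real.log p - Real.log 2
        - 2 * Real.log ((n:ℝ)+2) ≤ Real.log ((μ T).toReal) := by
      have hkc : (δ * (n:ℝ) / 2 + 1) * c ≤ (k:ℝ) * c := by nlinarith
      calc (δ * (n:ℝ) / 2 + 1) * c + Real.log p - Real.log 2 - 2 * Real.log ((n:ℝ)+2)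
          ≤ (k:ℝ) * c + Real.log p - Real.log 2 - 2 * Real.log ((k:ℝ)+1) := by linarith
        _ ≤ Real.log qR := by rw [hlogqR, hc]; linarith
        _ ≤ _ := hlogT
    -- divide by n
    have : u n ≤ Real.log ((μ T).toReal) / (n:ℝ) := by
      simp only [hu]
      have heq : δ * c / 2 + (C0 - 2 * Real.log ((n:ℝ)+2)) / (n:ℝ)
          = ((δ * (n:ℝ) / 2 + 1) * c + Real.log p - Real.log 2
            - 2 * Real.log ((n:ℝ)+2)) / (n:ℝ) := by
        rw [hC0]
        field_simp
        ring
      rw [heq]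
      exact div_le_div_of_nonneg_right hnum (le_of_lt hnR)
    exact this
  -- limit of u
  have t1 : Tendsto (fun n : ℕ => C0 / (n:ℝ)) atTop (nhds 0) :=
    tendsto_const_div_atTop_nhds_zero_nat C0
  have t2 : Tendsto (fun n : ℕ => Real.log ((n:ℝ)+2) / (n:ℝ)) atTop (nhds 0) := by
    have h := Real.tendsto_pow_log_div_mul_add_atTop 1 (-2) 1 one_ne_zero
    have hcomp : Tendsto (fun n : ℕ => (n:ℝ)+2) atTop atTop :=
      tendsto_atTop_add_const_right atTop 2 tendsto_natCast_atTop_atTop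
    apply (h.comp hcomp).congr
    intro n
    simp only [Function.comp_apply, pow_one, one_mul]
    norm_num
  have tu : Tendsto u atTop (nhds (δ * c / 2)) := by
    have h2 : Tendsto (fun n : ℕ => (C0 - 2 * Real.log ((n:ℝ)+2)) / (n:ℝ)) atTop (nhds 0) := by
      have h3 := t1.sub (t2.const_mul 2)
      norm_num at h3
      apply h3.congr
      intro n
      rw [sub_div]
      ring
    have h4 := (tendsto_const_nhds (x := δ * c / 2) (f := atTop (α := ℕ))).add h2
    rw [add_zero] at h4
    exact h4
  have hg0 : ∀ n, g n ≤ 0 := by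
    intro n
    apply div_nonpos_of_nonpos_of_nonneg _ (Nat.cast_nonneg n)
    apply Real.log_nonpos ENNReal.toReal_nonneg
    have h5 := ENNReal.toReal_mono (by simp : (1:ℝ≥0∞) ≠ ⊤)
      (prob_le_one (μ := μ) (s := {ω | (Mcount Y n ω : ℝ) ≤ (n : ℝ) * (1 - δ)}))
    simpa using h5
  have hbound : IsBoundedUnder (· ≤ ·) atTop g := Filter.isBoundedUnder_of ⟨0, hg0⟩
  calc -(δ * Dhalf p) = δ * c / 2 := hDc
    _ = liminf u atTop := (tu.liminf_eq).symm
    _ ≤ liminf g atTop := liminf_le_liminf (eventually_atTop.mpr ⟨1, hpoint⟩)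
        tu.isBoundedUnder_ge hbound.isCoboundedUnder_ge
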